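/- Let η1, η2p, η2m ∈ ℝ with 0 < η2p ≤ 1, 0 < η2m ≤ 1, η2p + η2m ≤ 1, and η2p - Real.sqrt (η2m * (1 - η2p)) ≤ η1 ≤ Real.sqrt (η2p * (1 - η2m)) - η2m. Define η1p = η2p * (η1 + η2m * Real.sqrt ((η2p + η2m - η1²) / (η2m * η2p))) / (η2m + η2p) and η1m = η2m * (η1 - η2p * Real.sqrt ((η2p + η2m - η1²) / (η2m * η2p))) / (η2m + η2p). Then η1p ≥ η2p and -η1m ≥ η2m (the standard half-moment realizability conditions of second order for the split moments). -/

import Mathlib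

theorem dmm2_half_moment_realizability
    (η1 η2p η2m : ℝ) (h2p : 0 < η2p) (h2p1 : η2p ≤ 1) (h2m : 0 < η2m) (h2m1 : η2m ≤ 1)
    (hsum : η2p + η2m ≤ 1)
    (hlow : η2p - Real.sqrt (η2m * (1 - η2p)) ≤ η1)
    (hup : η1 ≤ Real.sqrt (η2p * (1 - η2m)) - η2m)
    (η1p η1m : ℝ)
    (hη1p : η1p = η2p * (η1 + η2m * Real.sqrt ((η2p + η2m - η1 ^ 2) / (η2m * η2p))) / (η2m + η2p))
    (hη1m : η1m = η2m * (η1 - η2p * Real.sqrt ((η2p + η2m - η1 ^ 2) / (η2m * η2p))) / (η2m + η2p)) :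
    η1p ≥ η2p ∧ -η1m ≥ η2m := by
  set s := Real.sqrt ((η2p + η2m - η1 ^ 2) / (η2m * η2p)) with hs
  have hs0 : 0 ≤ s := Real.sqrt_nonneg _
  have hmp : 0 < η2m + η2p := by linarith
  have key1 : η2m + η2p - η1 ≤ η2m * s := by
    rcases le_or_gt (η2m + η2p - η1) 0 with h | h
    · exact h.trans (by positivity)
    · have h1 : η2p - η1 ≤ Real.sqrt (η2m * (1 - η2p)) := by linarith
      have hm : η2m ≤ Real.sqrt (η2m * (1 - η2p)) := by
        have := Real.sqrt_le_sqrt (show η2m ^ 2 ≤ η2m * (1 - η2p) by nlinarith)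
        rwa [Real.sqrt_sq h2m.le] at this
      have h2 : η1 - η2p ≤ Real.sqrt (η2m * (1 - η2p)) := by linarith
      have hbnd : (η1 - η2p) ^ 2 ≤ η2m * (1 - η2p) := by
        have hsq := sq_le_sq' (by linarith) h2
        calc (η1 - η2p) ^ 2 ≤ (Real.sqrt (η2m * (1 - η2p))) ^ 2 := hsq
          _ = η2m * (1 - η2p) := Real.sq_sqrt (by nlinarith)
      have hkey : η2p * (η2m + η2p - η1) ^ 2 ≤ η2m * (η2p + η2m - η1 ^ 2) := by
        nlinarith [mul_nonneg (show (0:ℝ) ≤ η2p + η2m by linarith)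
          (show (0:ℝ) ≤ η2m * (1 - η2p) - (η1 - η2p) ^ 2 by linarith)]
      have hrw : η2m * s = Real.sqrt (η2m * (η2p + η2m - η1 ^ 2) / η2p) := by
        rw [hs, show η2m * (η2p + η2m - η1 ^ 2) / η2p
            = η2m ^ 2 * ((η2p + η2m - η1 ^ 2) / (η2m * η2p)) by
          field_simp]
        rw [Real.sqrt_mul (sq_nonneg _), Real.sqrt_sq h2m.le]
      rw [hrw]
      rw [show η2m + η2p - η1 = Real.sqrt ((η2m + η2p - η1) ^ 2) from
        (Real.sqrt_sq h.le).symm]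
      apply Real.sqrt_le_sqrt
      rw [le_div_iff₀ h2p]
      nlinarith
  have key2 : η2m + η2p + η1 ≤ η2p * s := by
    rcases le_or_gt (η2m + η2p + η1) 0 with h | h
    · exact h.trans (by positivity)
    · have h1 : η1 + η2m ≤ Real.sqrt (η2p * (1 - η2m)) := by linarith
      have hp : η2p ≤ Real.sqrt (η2p * (1 - η2m)) := by
        have := Real.sqrt_le_sqrt (show η2p ^ 2 ≤ η2p * (1 - η2m) by nlinarith)
        rwa [Real.sqrt_sq h2p.le] at this
      have hbnd : (η1 + η2m) ^ 2 ≤ η2p * (1 - η2m) := by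
        have hsq := sq_le_sq' (by linarith) h1
        calc (η1 + η2m) ^ 2 ≤ (Real.sqrt (η2p * (1 - η2m))) ^ 2 := hsq
          _ = η2p * (1 - η2m) := Real.sq_sqrt (by nlinarith)
      have hkey : η2m * (η2m + η2p + η1) ^ 2 ≤ η2p * (η2p + η2m - η1 ^ 2) := by
        nlinarith [mul_nonneg (show (0:ℝ) ≤ η2p + η2m by linarith)
          (show (0:ℝ) ≤ η2p * (1 - η2m) - (η1 + η2m) ^ 2 by linarith)]
      have hrw : η2p * s = Real.sqrt (η2p * (η2p + η2m - η1 ^ 2) / η2m) := by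
        rw [hs, show η2p * (η2p + η2m - η1 ^ 2) / η2m
            = η2p ^ 2 * ((η2p + η2m - η1 ^ 2) / (η2m * η2p)) by
          field_simp]
        rw [Real.sqrt_mul (sq_nonneg _), Real.sqrt_sq h2p.le]
      rw [hrw]
      rw [show η2m + η2p + η1 = Real.sqrt ((η2m + η2p + η1) ^ 2) from
        (Real.sqrt_sq h.le).symm]
      apply Real.sqrt_le_sqrt
      rw [le_div_iff₀ h2m]
      nlinarith
  constructor
  · rw [hη1p, ge_iff_le, le_div_iff₀ hmp]
    nlinarith
  · rw [hη1m, ge_iff_le,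
      show -(η2m * (η1 - η2p * s) / (η2m + η2p))
        = η2m * (η2p * s - η1) / (η2m + η2p) by ring,
      le_div_iff₀ hmp]
    nlinarith
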